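/- (Ideal multiple structures) Let b^{k₁}, …, b^{k_{n₀}} ∈ {0,1}^n be vectors with ‖b^{k_s}‖₁ = k_s > p, whose pairwise supports intersect in at most p coordinates. Define f(b) = 0 iff ‖b‖₁ ≤ p or b ≼ b^{k_s} for some s. Then for any coordinate i, with i_s := (b^{k_s})_i ∈ {0,1}, the weighted influence is Inf_i^q[f] = (C(n-1,p) - Σ_{s : i_s=1} C(k_s-1,p)) q^p (1-q)^{n-p-1} + Σ_{s : i_s=0} Σ_{l=p+1}^{k_s} C(k_s,l) q^l (1-q)^{n-l-1}. -/

import Mathlib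

open Finset

/-- Hamming weight of a Boolean vector. -/
def wt {n : ℕ} (b : Fin n → Bool) : ℕ := (Finset.univ.filter fun i => b i = true).card

/-- Bernoulli(q) measure of a single vertex of the cube. -/
noncomputable def mu {n : ℕ} (q : ℝ) (b : Fin n → Bool) : ℝ :=
  q ^ wt b * (1 - q) ^ (n - wt b)

/-- Flip the `i`-th bit. -/
def bflip {n : ℕ} (i : Fin n) (b : Fin n → Bool) : Fin n → Bool :=
  Function.update b i (!(b i))

/-- Bernoulli(q) weighted influence of coordinate `i` on `f`. -/
noncomputable def Infl {n : ℕ} (q : ℝ) (f : (Fin n → Bool) → Bool) (i : Fin n) : ℝ :=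
  ∑ b : Fin n → Bool, if f b ≠ f (bflip i b) then mu q b else 0

/-- The monotone Boolean function of several structures `bs`: feasible (value 0)
iff the subset has at most `p` elements or is contained in one of the structures. -/
def fMulti {n n₀ : ℕ} (p : ℕ) (bs : Fin n₀ → Fin n → Bool) (b : Fin n → Bool) : Bool :=
  if wt b ≤ p ∨ (∃ s, ∀ i, b i ≤ bs s i) then false else true

namespace IdealAux
variable {n : ℕ}

def supp (b : Fin n → Bool) : Finset (Fin n) := univ.filter fun j => b j = true

lemma wt_eq (b : Fin n → Bool) : wt b = (supp b).card := rfl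

lemma mem_supp {b : Fin n → Bool} {j : Fin n} : j ∈ supp b ↔ b j = true := by
  simp [supp]

lemma supp_update_true (b : Fin n → Bool) (i : Fin n) :
    supp (Function.update b i true) = insert i (supp b) := by
  ext j
  rcases eq_or_ne j i with rfl | h
  · simp [mem_supp, Function.update]
  · simp [mem_supp, Function.update, h]

lemma wt_update_true {b : Fin n → Bool} {i : Fin n} (h : b i = false) :
    wt (Function.update b i true) = wt b + 1 := by
  rw [wt_eq, wt_eq, supp_update_true, card_insert_of_notMem]
  simp [mem_supp, h]

lemma le_iff_supp (b c : Fin n → Bool) : (∀ j, b j ≤ c j) ↔ supp b ⊆ supp c := by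
  constructor
  · intro h j hj
    have := h j
    rw [mem_supp] at hj ⊢
    rw [hj] at this
    rcases Bool.eq_false_or_eq_true (c j) with hc | hc
    · exact hc
    · rw [hc] at this; exact absurd this (by decide)
  · intro h j
    rcases Bool.eq_false_or_eq_true (b j) with hb | hb
    · have := h (mem_supp.mpr hb)
      rw [mem_supp] at this
      simp [hb, this]
    · simp [hb]

/-- counting: vectors with support inside S of weight l -/
lemma card_fiber (S : Finset (Fin n)) (l : ℕ) :
    (univ.filter fun b : Fin n → Bool => supp b ⊆ S ∧ wt b = l).card = S.card.choose l := by
  rw [← card_powersetCard l S]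
  apply card_nbij' (i := fun b => supp b) (j := fun A j => decide (j ∈ A))
  · intro b hb
    simp only [mem_coe, mem_filter, mem_univ, true_and] at hb
    rw [mem_coe, mem_powersetCard]
    exact ⟨hb.1, by rw [← wt_eq]; exact hb.2⟩
  · intro A hA
    rw [mem_coe, mem_powersetCard] at hA
    simp only [mem_coe, mem_filter, mem_univ, true_and]
    have hs : supp (fun j => decide (j ∈ A)) = A := by
      ext j; simp [mem_supp]
    rw [wt_eq, hs]
    exact ⟨hA.1, hA.2⟩
  · intro b _
    funext j
    rcases Bool.eq_false_or_eq_true (b j) with hb | hb <;> simp [mem_supp, hb]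
  · intro A hA
    ext j; simp [mem_supp]

lemma supp_subset_erase {b : Fin n → Bool} {i : Fin n} (h : b i = false) :
    supp b ⊆ univ.erase i := by
  intro j hj
  refine mem_erase.mpr ⟨fun hji => ?_, mem_univ j⟩
  subst hji; rw [mem_supp, h] at hj; exact absurd hj (by decide)

lemma wt_lt_of_false {b : Fin n → Bool} {i : Fin n} (h : b i = false) : wt b < n := by
  have := card_le_card (supp_subset_erase h)
  rw [card_erase_of_mem (mem_univ i), card_univ, Fintype.card_fin] at this
  have hn : 0 < n := i.pos
  rw [wt_eq]
  omega

lemma infl_pairs (q : ℝ) (f : (Fin n → Bool) → Bool)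
    (hmono : ∀ b c : Fin n → Bool, (∀ j, b j ≤ c j) → f c = false → f b = false)
    (i : Fin n) :
    Infl q f i = ∑ b ∈ univ.filter
        (fun b : Fin n → Bool => b i = false ∧ f b = false ∧ f (Function.update b i true) = true),
      q ^ wt b * (1 - q) ^ (n - 1 - wt b) := by
  classical
  unfold Infl
  rw [← Finset.sum_filter_add_sum_filter_not univ (fun b : Fin n → Bool => b i = false)]
  have hre : ∑ b ∈ univ.filter (fun b : Fin n → Bool => ¬ b i = false),
      (if f b ≠ f (bflip i b) then mu q b else 0)
      = ∑ c ∈ univ.filter (fun c : Fin n → Bool => c i = false),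
      (if f (Function.update c i true) ≠ f c then mu q (Function.update c i true) else 0) := by
    apply Finset.sum_nbij' (i := fun b => Function.update b i false)
      (j := fun c => Function.update c i true)
    · intro b hb; simp_all
    · intro c hc; simp_all
    · intro b hb
      simp only [mem_filter, mem_univ, true_and, Bool.not_eq_false] at hb
      funext j
      rcases eq_or_ne j i with rfl | h
      · simp [Function.update, hb]
      · simp [Function.update, h]
    · intro c hc
      simp only [mem_filter, mem_univ, true_and] at hc
      funext j
      rcases eq_or_ne j i with rfl | h
      · simp [Function.update, hc]
      · simp [Function.update, h]
    · intro b hb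
      simp only [mem_filter, mem_univ, true_and, Bool.not_eq_false] at hb
      have h1 : bflip i b = Function.update b i false := by
        unfold bflip; rw [hb]; rfl
      have h2 : Function.update (Function.update b i false) i true = b := by
        funext j
        rcases eq_or_ne j i with rfl | h
        · simp [Function.update, hb]
        · simp [Function.update, h]
      rw [h1, h2]
  rw [hre, ← Finset.sum_add_distrib, Finset.sum_filter, Finset.sum_filter]
  apply Finset.sum_congr rfl
  intro c _
  by_cases hci : c i = false
  · simp only [hci, if_true, true_and]
    have hflip : bflip i c = Function.update c i true := by
      unfold bflip; rw [hci]; rfl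
    rw [hflip]
    set c1 := Function.update c i true with hc1
    by_cases hne : f c = f c1
    · simp [hne]
    · have hle : ∀ j, c j ≤ c1 j := by
        intro j
        rcases eq_or_ne j i with rfl | h
        · simp [hc1, Function.update, hci]
        · simp [hc1, Function.update, h]
      have hfc : f c = false := by
        rcases Bool.eq_false_or_eq_true (f c1) with h1 | h1
        · exact Bool.eq_false_iff.mpr (fun hh => hne (hh.trans h1.symm))
        · exact hmono c c1 hle h1
      have hfc1 : f c1 = true := by
        rcases Bool.eq_false_or_eq_true (f c1) with h1 | h1
        · exact h1
        · exact absurd (hfc.trans h1.symm) hne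
      have hcond : (f c = false ∧ f c1 = true) := ⟨hfc, hfc1⟩
      rw [if_pos (fun h => hne h), if_pos (fun h => hne h.symm), if_pos hcond]
      unfold mu
      rw [wt_update_true hci]
      have hw : wt c < n := wt_lt_of_false hci
      have e1 : n - wt c = (n - 1 - wt c) + 1 := by omega
      have e2 : n - (wt c + 1) = n - 1 - wt c := by omega
      rw [e1, e2, pow_succ, pow_succ]
      ring
  · simp only [hci, if_false, false_and]
    rw [if_neg (by simp)]
    simp

lemma fMulti_false_iff {n₀ p : ℕ} (bs : Fin n₀ → Fin n → Bool) (b : Fin n → Bool) :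
    fMulti p bs b = false ↔ wt b ≤ p ∨ ∃ s, supp b ⊆ supp (bs s) := by
  have h : (∃ s, ∀ j, b j ≤ bs s j) ↔ ∃ s, supp b ⊆ supp (bs s) :=
    exists_congr fun s => le_iff_supp b (bs s)
  rw [← h]
  by_cases hc : wt b ≤ p ∨ (∃ s, ∀ j, b j ≤ bs s j)
  · simp [fMulti, hc]
  · simp [fMulti, hc]

lemma fMulti_true_iff {n₀ p : ℕ} (bs : Fin n₀ → Fin n → Bool) (b : Fin n → Bool) :
    fMulti p bs b = true ↔ p < wt b ∧ ∀ s, ¬ supp b ⊆ supp (bs s) := by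
  rw [← Bool.ne_false_iff, ne_eq, fMulti_false_iff]
  push_neg
  rfl

end IdealAux

open IdealAux

theorem ideal_multi_influence {n n₀ p : ℕ} (k : Fin n₀ → ℕ)
    (hpk : ∀ s, p < k s) (hkn : ∀ s, k s < n)
    (q : ℝ) (hq : q ∈ Set.Ioo (0:ℝ) 1)
    (bs : Fin n₀ → Fin n → Bool) (hwt : ∀ s, wt (bs s) = k s)
    (hideal : ∀ s t, s ≠ t →
      (Finset.univ.filter fun i => bs s i = true ∧ bs t i = true).card ≤ p)
    (i : Fin n) :
    Infl q (fMulti p bs) i =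
      (((n - 1).choose p : ℝ) -
          ∑ s ∈ Finset.univ.filter fun s => bs s i = true, ((k s - 1).choose p : ℝ)) *
        q ^ p * (1 - q) ^ (n - p - 1) +
      ∑ s ∈ Finset.univ.filter fun s => bs s i = false,
        ∑ l ∈ Finset.Icc (p + 1) (k s), ((k s).choose l : ℝ) * q ^ l * (1 - q) ^ (n - l - 1) := by
  classical
  have hsuppcard : ∀ s, (supp (bs s)).card = k s := fun s => by
    rw [← wt_eq]; exact hwt s
  have hint : ∀ s t, s ≠ t → (supp (bs s) ∩ supp (bs t)).card ≤ p := by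
    intro s t hst
    have e : supp (bs s) ∩ supp (bs t)
        = univ.filter (fun j => bs s j = true ∧ bs t j = true) := by
      ext j
      simp [supp, mem_inter, mem_filter, mem_supp]
    rw [e]
    exact hideal s t hst
  have hmono : ∀ b c : Fin n → Bool, (∀ j, b j ≤ c j) →
      fMulti p bs c = false → fMulti p bs b = false := by
    intro b c h hc
    rw [fMulti_false_iff] at hc ⊢
    have hsub := (le_iff_supp b c).mp h
    rcases hc with h1 | ⟨s, hs⟩
    · exact Or.inl (le_trans (by rw [wt_eq, wt_eq]; exact card_le_card hsub) h1)
    · exact Or.inr ⟨s, hsub.trans hs⟩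
  rw [infl_pairs q _ hmono i]
  -- characterize the pair condition
  have condiff : ∀ b : Fin n → Bool,
      (b i = false ∧ fMulti p bs b = false ∧ fMulti p bs (Function.update b i true) = true) ↔
      ((b i = false ∧ wt b = p ∧ ∀ s, bs s i = true → ¬ supp b ⊆ supp (bs s)) ∨
       (∃ s, bs s i = false ∧ supp b ⊆ supp (bs s) ∧ p < wt b)) := by
    intro b
    constructor
    · rintro ⟨hb0, hf0, hf1⟩
      rw [fMulti_true_iff] at hf1
      rw [fMulti_false_iff] at hf0
      obtain ⟨hw1, hns⟩ := hf1
      rw [wt_update_true hb0] at hw1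
      have hns' : ∀ s, bs s i = true → ¬ supp b ⊆ supp (bs s) := by
        intro s hsi hsub
        exact hns s (by
          rw [supp_update_true]
          exact insert_subset (mem_supp.mpr hsi) hsub)
      by_cases hwp : wt b = p
      · exact Or.inl ⟨hb0, hwp, hns'⟩
      · have hplt : p < wt b := by omega
        rcases hf0 with h1 | ⟨s, hs⟩
        · omega
        · refine Or.inr ⟨s, ?_, hs, hplt⟩
          rcases Bool.eq_false_or_eq_true (bs s i) with h2 | h2
          · exact absurd hs (hns' s h2)
          · exact h2
    · rintro (⟨hb0, hwp, hns⟩ | ⟨s, hsi, hsub, hplt⟩)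
      · refine ⟨hb0, ?_, ?_⟩
        · rw [fMulti_false_iff]; exact Or.inl (le_of_eq hwp)
        · rw [fMulti_true_iff]
          refine ⟨by rw [wt_update_true hb0]; omega, ?_⟩
          intro s hsub
          rw [supp_update_true, insert_subset_iff] at hsub
          exact hns s (mem_supp.mp hsub.1) hsub.2
      · have hb0 : b i = false := by
          rcases Bool.eq_false_or_eq_true (b i) with h2 | h2
          · have hmem : i ∈ supp (bs s) := hsub (mem_supp.mpr h2)
            rw [mem_supp, hsi] at hmem
            exact absurd hmem (by decide)
          · exact h2
        refine ⟨hb0, ?_, ?_⟩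
        · rw [fMulti_false_iff]; exact Or.inr ⟨s, hsub⟩
        · rw [fMulti_true_iff]
          refine ⟨by rw [wt_update_true hb0]; omega, ?_⟩
          intro t hsubt
          rw [supp_update_true, insert_subset_iff] at hsubt
          have hti : bs t i = true := mem_supp.mp hsubt.1
          have hts : s ≠ t := by
            rintro rfl
            rw [hsi] at hti
            exact absurd hti (by decide)
          have hsub2 : supp b ⊆ supp (bs s) ∩ supp (bs t) :=
            subset_inter hsub hsubt.2
          have hcard := card_le_card hsub2
          rw [← wt_eq] at hcard
          have := hint s t hts
          omega
  have hTeq : (univ.filter fun b : Fin n → Bool =>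
        b i = false ∧ fMulti p bs b = false ∧ fMulti p bs (Function.update b i true) = true)
      = univ.filter (fun b : Fin n → Bool =>
        (b i = false ∧ wt b = p ∧ ∀ s, bs s i = true → ¬ supp b ⊆ supp (bs s)) ∨
        (∃ s, bs s i = false ∧ supp b ⊆ supp (bs s) ∧ p < wt b)) := by
    ext b
    simp only [mem_filter, mem_univ, true_and]
    exact condiff b
  rw [hTeq, filter_or]
  -- disjointness of the two parts
  have hdisj : Disjoint
      (univ.filter fun b : Fin n → Bool =>
        b i = false ∧ wt b = p ∧ ∀ s, bs s i = true → ¬ supp b ⊆ supp (bs s))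
      (univ.filter fun b : Fin n → Bool =>
        ∃ s, bs s i = false ∧ supp b ⊆ supp (bs s) ∧ p < wt b) := by
    rw [disjoint_left]
    intro b hb1 hb2
    obtain ⟨-, -, hwp, -⟩ := mem_filter.mp hb1
    obtain ⟨-, s, -, -, hlt⟩ := mem_filter.mp hb2
    omega
  rw [sum_union hdisj]
  -- First part
  have e1 : n - 1 - p = n - p - 1 := by omega
  have hT1 : ∑ b ∈ (univ.filter fun b : Fin n → Bool =>
        b i = false ∧ wt b = p ∧ ∀ s, bs s i = true → ¬ supp b ⊆ supp (bs s)),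
        q ^ wt b * (1 - q) ^ (n - 1 - wt b)
      = (((n - 1).choose p : ℝ) -
          ∑ s ∈ univ.filter (fun s => bs s i = true), ((k s - 1).choose p : ℝ)) *
        q ^ p * (1 - q) ^ (n - p - 1) := by
    have hconst : ∑ b ∈ (univ.filter fun b : Fin n → Bool =>
          b i = false ∧ wt b = p ∧ ∀ s, bs s i = true → ¬ supp b ⊆ supp (bs s)),
          q ^ wt b * (1 - q) ^ (n - 1 - wt b)
        = ∑ _b ∈ (univ.filter fun b : Fin n → Bool =>
          b i = false ∧ wt b = p ∧ ∀ s, bs s i = true → ¬ supp b ⊆ supp (bs s)),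
          q ^ p * (1 - q) ^ (n - p - 1) :=
      Finset.sum_congr rfl fun b hb => by rw [(mem_filter.mp hb).2.2.1, e1]
    rw [hconst, sum_const, nsmul_eq_mul]
    -- now compute the cardinality
    have hcard : (univ.filter fun b : Fin n → Bool =>
        b i = false ∧ wt b = p ∧ ∀ s, bs s i = true → ¬ supp b ⊆ supp (bs s)).card
        = (n - 1).choose p - ∑ s ∈ univ.filter (fun s => bs s i = true), (k s - 1).choose p
        ∧ ∑ s ∈ univ.filter (fun s => bs s i = true), (k s - 1).choose p ≤ (n - 1).choose p := by
      set P : Finset (Fin n → Bool) :=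
        univ.filter (fun b => b i = false ∧ wt b = p) with hP
      set Ps : Fin n₀ → Finset (Fin n → Bool) :=
        fun s => univ.filter (fun b => (b i = false ∧ wt b = p) ∧ supp b ⊆ supp (bs s)) with hPs
      set U : Finset (Fin n → Bool) :=
        (univ.filter (fun s => bs s i = true)).biUnion Ps with hU
      have hT1P : (univ.filter fun b : Fin n → Bool =>
          b i = false ∧ wt b = p ∧ ∀ s, bs s i = true → ¬ supp b ⊆ supp (bs s)) = P \ U := by
        ext b
        constructor
        · intro hb
          obtain ⟨-, hb0, hwp, hns⟩ := mem_filter.mp hb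
          refine mem_sdiff.mpr ⟨mem_filter.mpr ⟨mem_univ _, hb0, hwp⟩, ?_⟩
          intro hmem
          obtain ⟨s, hs, hbs⟩ := mem_biUnion.mp hmem
          exact hns s (mem_filter.mp hs).2 (mem_filter.mp hbs).2.2
        · intro hb
          obtain ⟨hP', hU'⟩ := mem_sdiff.mp hb
          obtain ⟨-, hb0, hwp⟩ := mem_filter.mp hP'
          refine mem_filter.mpr ⟨mem_univ _, hb0, hwp, ?_⟩
          intro s hsi hsub
          exact hU' (mem_biUnion.mpr ⟨s, mem_filter.mpr ⟨mem_univ s, hsi⟩,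
            mem_filter.mpr ⟨mem_univ b, ⟨hb0, hwp⟩, hsub⟩⟩)
      have hUP : U ⊆ P := by
        intro b hb
        rw [hU, mem_biUnion] at hb
        obtain ⟨s, -, hbs⟩ := hb
        rw [hPs] at hbs
        rw [hP, mem_filter]
        exact ⟨mem_univ b, (mem_filter.mp hbs).2.1⟩
      have hcardP : P.card = (n - 1).choose p := by
        have hPe : P = univ.filter (fun b : Fin n → Bool =>
            supp b ⊆ univ.erase i ∧ wt b = p) := by
          ext b
          simp only [hP, mem_filter, mem_univ, true_and]
          constructor
          · rintro ⟨hb0, hwp⟩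
            exact ⟨supp_subset_erase hb0, hwp⟩
          · rintro ⟨hsub, hwp⟩
            refine ⟨?_, hwp⟩
            rcases Bool.eq_false_or_eq_true (b i) with h2 | h2
            · have := hsub (mem_supp.mpr h2)
              exact absurd (mem_erase.mp this).1 (by simp)
            · exact h2
        rw [hPe, card_fiber, card_erase_of_mem (mem_univ i), card_univ, Fintype.card_fin]
      have hcardPs : ∀ s ∈ univ.filter (fun s => bs s i = true),
          (Ps s).card = (k s - 1).choose p := by
        intro s hs
        have hsi : bs s i = true := (mem_filter.mp hs).2
        have hPe : Ps s = univ.filter (fun b : Fin n → Bool =>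
            supp b ⊆ (supp (bs s)).erase i ∧ wt b = p) := by
          ext b
          simp only [hPs, mem_filter, mem_univ, true_and]
          constructor
          · rintro ⟨⟨hb0, hwp⟩, hsub⟩
            refine ⟨fun j hj => mem_erase.mpr ⟨?_, hsub hj⟩, hwp⟩
            rintro rfl
            rw [mem_supp, hb0] at hj
            exact absurd hj (by decide)
          · rintro ⟨hsub, hwp⟩
            have hb0 : b i = false := by
              rcases Bool.eq_false_or_eq_true (b i) with h2 | h2
              · have := hsub (mem_supp.mpr h2)
                exact absurd (mem_erase.mp this).1 (by simp)
              · exact h2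
            exact ⟨⟨hb0, hwp⟩, hsub.trans (erase_subset _ _)⟩
        rw [hPe, card_fiber, card_erase_of_mem (mem_supp.mpr hsi), hsuppcard s]
      have hdisjPs : ∀ s ∈ univ.filter (fun s => bs s i = true),
          ∀ t ∈ univ.filter (fun s => bs s i = true), s ≠ t → Disjoint (Ps s) (Ps t) := by
        intro s hs t ht hst
        rw [disjoint_left]
        intro b hbs hbt
        have hsi : bs s i = true := (mem_filter.mp hs).2
        have hti : bs t i = true := (mem_filter.mp ht).2
        obtain ⟨-, ⟨hb0, hwp⟩, hsubs⟩ := mem_filter.mp hbs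
        obtain ⟨-, -, hsubt⟩ := mem_filter.mp hbt
        have hsub2 : insert i (supp b) ⊆ supp (bs s) ∩ supp (bs t) :=
          insert_subset (mem_inter.mpr ⟨mem_supp.mpr hsi, mem_supp.mpr hti⟩)
            (subset_inter hsubs hsubt)
        have hci : i ∉ supp b := by
          rw [mem_supp, hb0]; decide
        have hcard2 := card_le_card hsub2
        rw [card_insert_of_notMem hci, ← wt_eq, hwp] at hcard2
        have := hint s t hst
        omega
      have hcardU : U.card = ∑ s ∈ univ.filter (fun s => bs s i = true), (k s - 1).choose p := by
        rw [hU, card_biUnion hdisjPs]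
        exact sum_congr rfl hcardPs
      refine ⟨by rw [hT1P, card_sdiff_of_subset hUP, hcardP, hcardU], ?_⟩
      rw [← hcardU, ← hcardP]
      exact card_le_card hUP
    rw [hcard.1, Nat.cast_sub hcard.2, Nat.cast_sum]
    ring
  rw [hT1]
  -- Second part
  have hT2 : ∑ b ∈ (univ.filter fun b : Fin n → Bool =>
        ∃ s, bs s i = false ∧ supp b ⊆ supp (bs s) ∧ p < wt b),
        q ^ wt b * (1 - q) ^ (n - 1 - wt b)
      = ∑ s ∈ univ.filter (fun s => bs s i = false),
        ∑ l ∈ Finset.Icc (p + 1) (k s), ((k s).choose l : ℝ) * q ^ l * (1 - q) ^ (n - l - 1) := by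
    set Bs : Fin n₀ → Finset (Fin n → Bool) :=
      fun s => univ.filter (fun b => supp b ⊆ supp (bs s) ∧ p < wt b) with hBs
    have hT2eq : (univ.filter fun b : Fin n → Bool =>
        ∃ s, bs s i = false ∧ supp b ⊆ supp (bs s) ∧ p < wt b)
        = (univ.filter (fun s => bs s i = false)).biUnion Bs := by
      ext b
      simp only [hBs, mem_filter, mem_univ, true_and, mem_biUnion]
    have hdisjBs : Set.PairwiseDisjoint
        (↑(univ.filter (fun s => bs s i = false)) : Set (Fin n₀)) Bs := by
      intro s hs t ht hst
      rw [Function.onFun, disjoint_left]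
      intro b hbs hbt
      obtain ⟨-, hsubs, hlt⟩ := mem_filter.mp hbs
      obtain ⟨-, hsubt, -⟩ := mem_filter.mp hbt
      have hsub2 : supp b ⊆ supp (bs s) ∩ supp (bs t) := subset_inter hsubs hsubt
      have hcard2 := card_le_card hsub2
      rw [← wt_eq] at hcard2
      have := hint s t hst
      omega
    rw [hT2eq, sum_biUnion hdisjBs]
    apply sum_congr rfl
    intro s hs
    have hmap : ∀ b ∈ Bs s, wt b ∈ Finset.Icc (p + 1) (k s) := by
      intro b hb
      obtain ⟨-, hsub, hlt⟩ := mem_filter.mp hb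
      rw [mem_Icc]
      refine ⟨hlt, ?_⟩
      have := card_le_card hsub
      rw [← wt_eq, hsuppcard s] at this
      exact this
    rw [← Finset.sum_fiberwise_of_maps_to hmap]
    apply sum_congr rfl
    intro l hl
    rw [mem_Icc] at hl
    have hfe : (Bs s).filter (fun b => wt b = l)
        = univ.filter (fun b : Fin n → Bool => supp b ⊆ supp (bs s) ∧ wt b = l) := by
      rw [hBs, filter_filter]
      ext b
      simp only [mem_filter, mem_univ, true_and]
      constructor
      · rintro ⟨⟨hsub, -⟩, hwl⟩
        exact ⟨hsub, hwl⟩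
      · rintro ⟨hsub, hwl⟩
        exact ⟨⟨hsub, by omega⟩, hwl⟩
    rw [hfe]
    have hconst2 : ∑ b ∈ univ.filter (fun b : Fin n → Bool =>
          supp b ⊆ supp (bs s) ∧ wt b = l), q ^ wt b * (1 - q) ^ (n - 1 - wt b)
        = ∑ _b ∈ univ.filter (fun b : Fin n → Bool =>
          supp b ⊆ supp (bs s) ∧ wt b = l), q ^ l * (1 - q) ^ (n - l - 1) :=
      Finset.sum_congr rfl fun b hb => by
        rw [(mem_filter.mp hb).2.2, show n - 1 - l = n - l - 1 by omega]
    rw [hconst2, sum_const, nsmul_eq_mul, card_fiber, hsuppcard s]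
    ring
  rw [hT2]
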